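/- Let G be an abelian Lie group with a left-invariant Riemannian metric ⟨·,·⟩. On the product group G × G, define g((v_a, v_b), (w_a, w_b)) = ⟨(L_{a⁻¹})_* v_a, (L_{b⁻¹})_* w_b⟩ + ⟨(L_{a⁻¹})_* w_a, (L_{b⁻¹})_* v_b⟩ at each point (a,b). Then g is a pseudo-Riemannian metric of neutral signature (n,n), the two foliations by factors {a}×G and G×{b} are g-isotropic, and the associated 2-form ω(X,Y) = g(FX,Y) (with F = id on T({a}×G)-direction and -id on the other) is closed, so G × G is a bi-Lagrangian manifold. -/

import Mathlib

/-- formalized at the Lie-algebra level via left-invariant objects,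
`𝔤` the Lie algebra of the abelian group `G` with inner product `B` giving the
left-invariant metric: on `𝔤 × 𝔤` (the left-invariant vector fields of `G × G`),
the metric `g((X,Y),(X',Y')) = B(X,Y') + B(X',Y)` is symmetric, nondegenerate, of
neutral signature `(n,n)`, both factor distributions `𝔤 ⊕ 0` and `0 ⊕ 𝔤` are
`g`-isotropic, and the 2-form `ω(u,v) = g(Fu,v)` (with `F = id` on the `{a}×G`
direction `0 ⊕ 𝔤` and `F = -id` on `𝔤 ⊕ 0`) is closed — `dω` is computed on
left-invariant fields by the invariant formula, using the componentwise bracket of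
the product Lie algebra. Hence `G × G` is bi-Lagrangian. -/
theorem stmt_16 {G : Type*} [LieRing G] [LieAlgebra ℝ G] [FiniteDimensional ℝ G]
    (n : ℕ) (hdim : Module.finrank ℝ G = n)
    (habel : ∀ X Y : G, ⁅X, Y⁆ = 0)
    (B : G →ₗ[ℝ] G →ₗ[ℝ] ℝ)
    (hBsymm : ∀ X Y, B X Y = B Y X)
    (hBpos : ∀ X : G, X ≠ 0 → 0 < B X X)
    (g : (G × G) →ₗ[ℝ] (G × G) →ₗ[ℝ] ℝ)
    (hgdef : ∀ u v : G × G, g u v = B u.1 v.2 + B v.1 u.2)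
    (F : (G × G) →ₗ[ℝ] (G × G))
    (hFdef : ∀ u : G × G, F u = (-u.1, u.2))
    (ω : (G × G) →ₗ[ℝ] (G × G) →ₗ[ℝ] ℝ)
    (hωdef : ∀ u v : G × G, ω u v = g (F u) v) :
    (∀ u v, g u v = g v u) ∧
    (∀ u, (∀ v, g u v = 0) → u = 0) ∧
    (∃ P N : Submodule ℝ (G × G), Module.finrank ℝ P = n ∧ Module.finrank ℝ N = n ∧
      IsCompl P N ∧ (∀ u ∈ P, u ≠ 0 → 0 < g u u) ∧ (∀ u ∈ N, u ≠ 0 → g u u < 0) ∧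
      (∀ u ∈ P, ∀ v ∈ N, g u v = 0)) ∧
    (∀ X X' : G, g (X, 0) (X', 0) = 0) ∧
    (∀ Y Y' : G, g ((0 : G), Y) ((0 : G), Y') = 0) ∧
    (∀ u v w : G × G,
      -ω (⁅u.1, v.1⁆, ⁅u.2, v.2⁆) w - ω (⁅v.1, w.1⁆, ⁅v.2, w.2⁆) u -
        ω (⁅w.1, u.1⁆, ⁅w.2, u.2⁆) v = 0) := by
  have hBzero : ∀ X : G, B X X = 0 → X = 0 := by
    intro X hX
    by_contra h
    exact absurd hX (ne_of_gt (hBpos X h))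
  refine ⟨?_, ?_, ?_, ?_, ?_, ?_⟩
  · intro u v; rw [hgdef, hgdef]; ring
  · intro u h
    have h1 : u.1 = 0 := by
      have := h (0, u.1)
      rw [hgdef] at this
      simp at this
      exact hBzero _ this
    have h2 : u.2 = 0 := by
      have := h (u.2, 0)
      rw [hgdef] at this
      simp at this
      exact hBzero _ this
    exact Prod.ext h1 h2
  · -- signature
    set fP : G →ₗ[ℝ] G × G := LinearMap.prod LinearMap.id LinearMap.id with hfP
    set fN : G →ₗ[ℝ] G × G := LinearMap.prod LinearMap.id (-LinearMap.id) with hfN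
    refine ⟨LinearMap.range fP, LinearMap.range fN, ?_, ?_, ?_, ?_, ?_, ?_⟩
    · rw [LinearMap.finrank_range_of_inj, hdim]
      intro x y hxy
      simpa [hfP, Prod.ext_iff] using hxy
    · rw [LinearMap.finrank_range_of_inj, hdim]
      intro x y hxy
      simp only [hfN, LinearMap.prod_apply, Prod.ext_iff, LinearMap.id_coe, id_eq,
        Pi.neg_apply, LinearMap.neg_apply, neg_inj] at hxy
      exact hxy.1
    · constructor
      · rw [disjoint_iff]
        ext u
        simp only [Submodule.mem_inf, LinearMap.mem_range, Submodule.mem_bot, hfP, hfN,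
          LinearMap.prod_apply, LinearMap.id_coe, id_eq, Function.prod, LinearMap.neg_apply]
        constructor
        · rintro ⟨⟨x, hx⟩, ⟨y, hy⟩⟩
          have hxy : ((x, x) : G × G) = (y, -y) := by rw [hx, hy]
          have h1 : x = y := congrArg Prod.fst hxy
          have h2 : x = -y := congrArg Prod.snd hxy
          have hx0 : x = 0 := by
            have h3 : (2 : ℝ) • x = 0 := by
              rw [two_smul]
              nth_rewrite 2 [h2]
              rw [h1, add_neg_cancel]
            rcases smul_eq_zero.mp h3 with h | h
            · norm_num at h
            · exact h
          rw [← hx, hx0]; simp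
        · rintro rfl; exact ⟨⟨0, by simp⟩, ⟨0, by simp⟩⟩
      · rw [codisjoint_iff, eq_top_iff]
        rintro ⟨a, b⟩ -
        have : ((a, b) : G × G) = fP ((1/2 : ℝ) • (a + b)) + fN ((1/2 : ℝ) • (a - b)) := by
          simp only [hfP, hfN, LinearMap.prod_apply, Function.prod, map_smul, LinearMap.id_coe,
            id_eq, LinearMap.neg_apply, Prod.smul_mk, Prod.mk_add_mk, Prod.mk.injEq]
          constructor <;> module
        rw [this]
        exact Submodule.add_mem_sup (LinearMap.mem_range_self _ _) (LinearMap.mem_range_self _ _)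
    · rintro u ⟨x, rfl⟩ hne
      have hx : x ≠ 0 := by
        intro h; apply hne; rw [h]; simp
      rw [hgdef]
      simp only [hfP, LinearMap.prod_apply, Function.prod, LinearMap.id_coe, id_eq]
      have := hBpos x hx
      linarith
    · rintro u ⟨x, rfl⟩ hne
      have hx : x ≠ 0 := by
        intro h; apply hne; rw [h]; simp
      rw [hgdef]
      simp only [hfN, LinearMap.prod_apply, Function.prod, LinearMap.id_coe, id_eq,
        LinearMap.neg_apply, map_neg, LinearMap.neg_apply]
      have := hBpos x hx
      linarith
    · rintro u ⟨x, rfl⟩ v ⟨y, rfl⟩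
      rw [hgdef]
      simp only [hfP, hfN, LinearMap.prod_apply, Function.prod, LinearMap.id_coe, id_eq,
        LinearMap.neg_apply, map_neg, LinearMap.neg_apply]
      rw [hBsymm y x]; ring
  · intro X X'; rw [hgdef]; simp
  · intro Y Y'; rw [hgdef]; simp
  · intro u v w
    simp only [habel]
    have h0 : ∀ z : G × G, ω ((0 : G), (0 : G)) z = 0 := by
      intro z
      have : ((0 : G), (0 : G)) = (0 : G × G) := rfl
      rw [this]; simp
    rw [h0, h0, h0]; ring
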